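/- Let X be a complex Banach space with dim X ≥ 2. A nonzero operator A ∈ B(X) has rank one if and only if for every T ∈ B(X), 0 belongs to the point spectrum of TA and the point spectrum of TA has at most two elements. -/

import Mathlib

open ContinuousLinearMap

/-- Point spectrum of a continuous linear operator. -/
def pointSpectrum {X : Type*} [NormedAddCommGroup X] [NormedSpace ℂ X]
    (A : X →L[ℂ] X) : Set ℂ :=
  {μ : ℂ | ∃ x : X, x ≠ 0 ∧ A x = μ • x}

/-- A continuous functional vanishing at `x` and equal to `1` at a point `y` not in the
span of `x`. -/
lemma exists_functional_aux {X : Type*} [NormedAddCommGroup X] [NormedSpace ℂ X]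
    [CompleteSpace X] {x y : X} (h : y ∉ Submodule.span ℂ ({x} : Set X)) :
    ∃ f : X →L[ℂ] ℂ, f x = 0 ∧ f y = 1 := by
  set S := Submodule.span ℂ ({x} : Set X) with hS
  haveI : FiniteDimensional ℂ S := FiniteDimensional.span_of_finite ℂ (Set.finite_singleton x)
  haveI : IsClosed (S : Set X) := S.closed_of_finiteDimensional
  have hcont : Continuous S.mkQ := S.isOpenQuotientMap_mkQ.continuous
  set π : X →L[ℂ] (X ⧸ S) := ⟨S.mkQ, hcont⟩ with hπ
  have hy : π y ≠ 0 := by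
    simpa [hπ, Submodule.Quotient.mk_eq_zero] using h
  obtain ⟨g, hg⟩ := SeparatingDual.exists_eq_one (R := ℂ) hy
  refine ⟨g.comp π, ?_, ?_⟩
  · have hx0 : π x = 0 := by
      simp [hπ, Submodule.Quotient.mk_eq_zero, hS, Submodule.mem_span_singleton_self]
    simp [hx0]
  · simpa using hg

theorem stmt2 {X : Type*} [NormedAddCommGroup X] [NormedSpace ℂ X]
    [CompleteSpace X] (hdim : 2 ≤ Module.rank ℂ X)
    (A : X →L[ℂ] X) (hA : A ≠ 0) :
    Module.rank ℂ (LinearMap.range (A : X →ₗ[ℂ] X)) = 1 ↔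
      ∀ T : X →L[ℂ] X,
        (0 : ℂ) ∈ pointSpectrum (T.comp A) ∧
        (pointSpectrum (T.comp A)).encard ≤ 2 := by
  constructor
  · -- forward direction
    intro h1 T
    set B := T.comp A with hBdef
    set Bl : X →ₗ[ℂ] X := (B : X →ₗ[ℂ] X) with hBl
    have hrange_eq : LinearMap.range Bl
        = (LinearMap.range (A : X →ₗ[ℂ] X)).map (T : X →ₗ[ℂ] X) := by
      rw [hBl, hBdef, ContinuousLinearMap.toLinearMap_comp, LinearMap.range_comp]
    have hrank : Module.rank ℂ (LinearMap.range Bl) ≤ 1 := by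
      rw [hrange_eq]
      calc Module.rank ℂ ((LinearMap.range (A : X →ₗ[ℂ] X)).map (T : X →ₗ[ℂ] X))
          ≤ Module.rank ℂ (LinearMap.range (A : X →ₗ[ℂ] X)) := rank_map_le _ _
        _ = 1 := h1
    -- 0 is an eigenvalue
    have h0 : (0 : ℂ) ∈ pointSpectrum B := by
      by_contra h0
      have hinj : Function.Injective Bl := by
        rw [← LinearMap.ker_eq_bot]
        rw [Submodule.eq_bot_iff]
        intro z hz
        by_contra hz0
        exact h0 ⟨z, hz0, by simpa [hBl] using hz⟩
      have := rank_range_of_injective Bl hinj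
      rw [this] at hrank
      exact absurd (hdim.trans hrank) (by norm_num)
    refine ⟨h0, ?_⟩
    -- at most one nonzero eigenvalue
    have key : ∀ μ ∈ pointSpectrum B, ∀ ν ∈ pointSpectrum B, μ ≠ 0 → ν ≠ 0 → μ = ν := by
      rintro μ ⟨x, hx0, hx⟩ ν ⟨y, hy0, hy⟩ hμ hν
      have hxmem : x ∈ LinearMap.range Bl := by
        refine ⟨μ⁻¹ • x, ?_⟩
        have : Bl (μ⁻¹ • x) = μ⁻¹ • (μ • x) := by
          simp only [map_smul]; rw [show Bl x = μ • x from hx]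
        rw [this, smul_smul, inv_mul_cancel₀ hμ, one_smul]
      have hymem : y ∈ LinearMap.range Bl := by
        refine ⟨ν⁻¹ • y, ?_⟩
        have : Bl (ν⁻¹ • y) = ν⁻¹ • (ν • y) := by
          simp only [map_smul]; rw [show Bl y = ν • y from hy]
        rw [this, smul_smul, inv_mul_cancel₀ hν, one_smul]
      obtain ⟨v₀, hv₀⟩ := rank_le_one_iff.mp hrank
      obtain ⟨a, ha⟩ := hv₀ ⟨x, hxmem⟩
      obtain ⟨b, hb⟩ := hv₀ ⟨y, hymem⟩
      have ha' : a • (v₀ : X) = x := congrArg Subtype.val ha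
      have hb' : b • (v₀ : X) = y := congrArg Subtype.val hb
      have ha0 : a ≠ 0 := by rintro rfl; exact hx0 (by simpa using ha'.symm)
      have hb0 : b ≠ 0 := by rintro rfl; exact hy0 (by simpa using hb'.symm)
      have hyx : y = (b * a⁻¹) • x := by
        rw [← ha', ← hb', smul_smul, mul_assoc, inv_mul_cancel₀ ha0, mul_one]
      have hBy : B y = (b * a⁻¹) • (μ • x) := by
        rw [hyx, map_smul]
        rw [show B x = μ • x from hx]
      have hba : b * a⁻¹ ≠ 0 := mul_ne_zero hb0 (inv_ne_zero ha0)
      have heq : ν • ((b * a⁻¹) • x) = (b * a⁻¹) • (μ • x) := by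
        rw [← hyx, ← hBy]; exact hy.symm
      have heq' : (ν * (b * a⁻¹)) • x = ((b * a⁻¹) * μ) • x := by
        simpa only [smul_smul] using heq
      have hsc : ν * (b * a⁻¹) = (b * a⁻¹) * μ := smul_left_injective ℂ hx0 heq'
      have : ν * (b * a⁻¹) = μ * (b * a⁻¹) := hsc.trans (mul_comm _ _)
      exact (mul_right_cancel₀ hba this).symm
    by_cases hP : ∃ μ ∈ pointSpectrum B, μ ≠ 0
    · obtain ⟨μ, hμmem, hμ0⟩ := hP
      have hsub : pointSpectrum B ⊆ {0, μ} := by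
        intro ν hν
        by_cases hν0 : ν = 0
        · exact Or.inl hν0
        · exact Or.inr (key ν hν μ hμmem hν0 hμ0)
      calc (pointSpectrum B).encard ≤ ({0, μ} : Set ℂ).encard := Set.encard_le_encard hsub
        _ = 2 := Set.encard_pair (Ne.symm hμ0)
    · push_neg at hP
      have hsub : pointSpectrum B ⊆ {0} := fun ν hν => hP ν hν
      calc (pointSpectrum B).encard ≤ ({0} : Set ℂ).encard := Set.encard_le_encard hsub
        _ = 1 := Set.encard_singleton _
        _ ≤ 2 := by norm_num
  · -- backward direction
    intro h
    set Al : X →ₗ[ℂ] X := (A : X →ₗ[ℂ] X) with hAl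
    -- A ≠ 0 gives a nonzero element of the range
    obtain ⟨u₁, hu₁⟩ : ∃ u : X, A u ≠ 0 := by
      by_contra hc
      push_neg at hc
      exact hA (ContinuousLinearMap.ext fun u => by simpa using hc u)
    have hx₁mem : A u₁ ∈ LinearMap.range Al := ⟨u₁, rfl⟩
    haveI : Nontrivial (LinearMap.range Al) :=
      ⟨⟨A u₁, hx₁mem⟩, 0, by simp [Subtype.ext_iff, hu₁]⟩
    by_contra hne
    have hgt : ¬ Module.rank ℂ (LinearMap.range Al) ≤ 1 := by
      intro hle
      exact hne (le_antisymm hle (Cardinal.one_le_iff_pos.mpr rank_pos))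
    rw [rank_le_one_iff] at hgt
    push_neg at hgt
    obtain ⟨v, hv⟩ := hgt ⟨A u₁, hx₁mem⟩
    obtain ⟨u₂, hu₂⟩ := v.2
    set x₁ := A u₁ with hx₁
    set x₂ := (v : X) with hx₂
    have hx₂span : x₂ ∉ Submodule.span ℂ ({x₁} : Set X) := by
      intro hmem
      obtain ⟨r, hr⟩ := Submodule.mem_span_singleton.mp hmem
      exact hv r (Subtype.ext hr)
    have hx₂0 : x₂ ≠ 0 := fun h0 => hx₂span (h0 ▸ (Submodule.span ℂ _).zero_mem)
    have hx₁span : x₁ ∉ Submodule.span ℂ ({x₂} : Set X) := by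
      intro hmem
      obtain ⟨r, hr⟩ := Submodule.mem_span_singleton.mp hmem
      apply hx₂span
      have hr0 : r ≠ 0 := by rintro rfl; exact hu₁ (by simpa using hr.symm)
      refine Submodule.mem_span_singleton.mpr ⟨r⁻¹, ?_⟩
      rw [← hr, smul_smul, inv_mul_cancel₀ hr0, one_smul]
    obtain ⟨f₂, hf₂x₁, hf₂x₂⟩ := exists_functional_aux hx₂span
    obtain ⟨f₁, hf₁x₂, hf₁x₁⟩ := exists_functional_aux hx₁span
    set T : X →L[ℂ] X := f₁.smulRight u₁ + (2 : ℂ) • f₂.smulRight u₂ with hT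
    have hu₁0 : u₁ ≠ 0 := fun h0 => hu₁ (by rw [hx₁, h0]; simp)
    have hu₂0 : u₂ ≠ 0 := fun h0 => hx₂0 (by rw [← hu₂, h0]; simp)
    have hTA₁ : (T.comp A) u₁ = (1 : ℂ) • u₁ := by
      rw [ContinuousLinearMap.comp_apply, ← hx₁, hT]
      simp [hf₁x₁, hf₂x₁]
    have hTA₂ : (T.comp A) u₂ = (2 : ℂ) • u₂ := by
      rw [ContinuousLinearMap.comp_apply, show A u₂ = x₂ from hu₂, hT]
      simp [hf₁x₂, hf₂x₂]
    obtain ⟨h0mem, hcard⟩ := h T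
    have hsub : ({0, 1, 2} : Set ℂ) ⊆ pointSpectrum (T.comp A) := by
      rintro μ (rfl | rfl | rfl)
      · exact h0mem
      · exact ⟨u₁, hu₁0, hTA₁⟩
      · exact ⟨u₂, hu₂0, hTA₂⟩
    have h3 : ({0, 1, 2} : Set ℂ).encard = 3 := by
      rw [Set.encard_insert_of_notMem (by norm_num), Set.encard_pair (by norm_num)]
      rfl
    have : (3 : ℕ∞) ≤ 2 := h3 ▸ (Set.encard_le_encard hsub).trans hcard
    norm_num at this
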